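/- Let E be a finite-dimensional real normed vector space and let X = {x₁, …, x_m} be a finite subset of E with m = |X| elements. Set R = 2m·max_{x ∈ X} ‖x‖ and let Y be the closed ball of radius R centered at the origin. Then for every positive integer n, the convex hull of n•X = {n·x : x ∈ X} is contained in Y + (X + X + ⋯ + X) (with n summands X). -/

import Mathlib

open Pointwise

/-- **Lemma (convex, explicit bound)**: Let `X` be a finite nonempty subset of a
finite-dimensional real normed vector space `E`, with `m = |X|` elements, and let
`R = 2 * m * max_{x ∈ X} ‖x‖`.  Let `Y` be the closed ball of radius `R` about the origin.
Then for every positive integer `n`, the convex hull of the dilate `n • X = {n • x | x ∈ X}`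
is contained in the Minkowski sum `Y + (X + ⋯ + X)` (`n` summands). -/
theorem stmt_1 {E : Type*} [NormedAddCommGroup E] [NormedSpace ℝ E] [FiniteDimensional ℝ E]
    (X : Finset E) (hX : X.Nonempty) (m : ℕ) (hm : m = X.card)
    (R : ℝ) (hR : R = 2 * m * X.sup' hX (fun x => ‖x‖)) :
    ∀ n : ℕ, 0 < n → ∀ v ∈ convexHull ℝ ((n : ℝ) • (X : Set E)),
      ∃ y ∈ Metric.closedBall (0 : E) R, ∃ x : Fin n → E,
        (∀ i, x i ∈ X) ∧ v = y + ∑ i, x i := by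
  intro n hn v hv
  obtain ⟨x₀, hx₀⟩ := hX
  set M : ℝ := X.sup' ⟨x₀, hx₀⟩ (fun x => ‖x‖) with hM
  have hM0 : 0 ≤ M := le_trans (norm_nonneg x₀) (Finset.le_sup' _ hx₀)
  have hMle : ∀ x ∈ X, ‖x‖ ≤ M := fun x hx => Finset.le_sup' _ hx
  rw [convexHull_smul] at hv
  obtain ⟨w, hw, rfl⟩ := hv
  rw [Finset.convexHull_eq] at hw
  obtain ⟨f, hf0, hf1, hfw⟩ := hw
  have hw' : w = ∑ x ∈ X, f x • x := by
    rw [← hfw, Finset.centerMass_eq_of_sum_1 _ _ hf1]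
    rfl
  set k : E → ℕ := fun x => ⌊(n : ℝ) * f x⌋₊ with hk
  have hk_le : ∀ x ∈ X, (k x : ℝ) ≤ (n : ℝ) * f x := fun x hx =>
    Nat.floor_le (mul_nonneg (Nat.cast_nonneg n) (hf0 x hx))
  have hk_lt : ∀ x ∈ X, (n : ℝ) * f x - k x < 1 := fun x hx => by
    have := Nat.lt_floor_add_one ((n : ℝ) * f x)
    simp only [hk]
    linarith
  have hsumK : (↑(∑ x ∈ X, k x) : ℝ) ≤ (n : ℝ) := by
    push_cast
    calc ∑ x ∈ X, (k x : ℝ) ≤ ∑ x ∈ X, (n : ℝ) * f x := Finset.sum_le_sum hk_le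
      _ = n := by rw [← Finset.mul_sum, hf1, mul_one]
  have hKn : ∑ x ∈ X, k x ≤ n := by exact_mod_cast hsumK
  set r : ℕ := n - ∑ x ∈ X, k x with hr
  have hrn : (r : ℝ) = (n : ℝ) - ∑ x ∈ X, (k x : ℝ) := by
    rw [hr, Nat.cast_sub hKn]
    push_cast
    ring
  have hrsum : (r : ℝ) = ∑ x ∈ X, ((n : ℝ) * f x - k x) := by
    rw [hrn, Finset.sum_sub_distrib, ← Finset.mul_sum, hf1, mul_one]
  have hrm : (r : ℝ) ≤ (m : ℝ) := by
    rw [hrsum, hm]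
    calc ∑ x ∈ X, ((n : ℝ) * f x - k x) ≤ ∑ _x ∈ X, (1 : ℝ) :=
          Finset.sum_le_sum (fun x hx => le_of_lt (hk_lt x hx))
      _ = X.card := by simp
  -- build the list of n elements of X
  set l : List E := (X.toList.flatMap fun a => List.replicate (k a) a) ++ List.replicate r x₀
    with hl
  have hflat_len : ∀ L : List E, (L.flatMap fun a => List.replicate (k a) a).length
      = (L.map k).sum := by
    intro L
    induction L with
    | nil => simp
    | cons a t ih => simp [List.flatMap_cons, ih]
  have hflat_sum : ∀ L : List E, (L.flatMap fun a => List.replicate (k a) a).sum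
      = (L.map fun a => k a • a).sum := by
    intro L
    induction L with
    | nil => simp
    | cons a t ih => simp [List.flatMap_cons, List.sum_append, ih]
  have hlen : l.length = n := by
    rw [hl, List.length_append, hflat_len, List.length_replicate]
    have : (X.toList.map k).sum = ∑ x ∈ X, k x := Finset.sum_map_toList X k
    rw [this, hr, Nat.add_sub_cancel' hKn]
  have hmem : ∀ e ∈ l, e ∈ X := by
    intro e he
    rw [hl, List.mem_append] at he
    rcases he with he | he
    · rw [List.mem_flatMap] at he
      obtain ⟨a, ha, he⟩ := he
      rw [List.eq_of_mem_replicate he]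
      exact Finset.mem_toList.mp ha
    · rw [List.eq_of_mem_replicate he]
      exact hx₀
  have hlsum : l.sum = (∑ x ∈ X, k x • x) + r • x₀ := by
    rw [hl, List.sum_append, hflat_sum, List.sum_replicate]
    congr 1
    exact Finset.sum_map_toList X (fun a => k a • a)
  refine ⟨(n : ℝ) • w - l.sum, ?_, fun i => l.get (Fin.cast hlen.symm i), ?_, ?_⟩
  · -- norm bound
    rw [mem_closedBall_zero_iff]
    have hnat : ∀ (j : ℕ) (z : E), j • z = (j : ℝ) • z := fun j z =>
      (Nat.cast_smul_eq_nsmul ℝ j z).symm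
    have hy : (n : ℝ) • w - l.sum
        = (∑ x ∈ X, ((n : ℝ) * f x - (k x : ℝ)) • x) - (r : ℝ) • x₀ := by
      rw [hlsum, hw', Finset.smul_sum]
      simp only [sub_smul, Finset.sum_sub_distrib, smul_smul, hnat]
      abel
    rw [hy]
    have h1 : ‖∑ x ∈ X, ((n : ℝ) * f x - (k x : ℝ)) • x‖ ≤ (m : ℝ) * M := by
      calc ‖∑ x ∈ X, ((n : ℝ) * f x - (k x : ℝ)) • x‖
          ≤ ∑ x ∈ X, ‖((n : ℝ) * f x - (k x : ℝ)) • x‖ := norm_sum_le _ _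
        _ ≤ ∑ _x ∈ X, M := by
            refine Finset.sum_le_sum (fun x hx => ?_)
            rw [norm_smul, Real.norm_eq_abs,
              abs_of_nonneg (by linarith [hk_le x hx])]
            calc ((n : ℝ) * f x - k x) * ‖x‖ ≤ 1 * M :=
                  mul_le_mul (le_of_lt (hk_lt x hx)) (hMle x hx) (norm_nonneg x) one_pos.le
              _ = M := one_mul M
        _ = (m : ℝ) * M := by rw [Finset.sum_const, hm, nsmul_eq_mul]
    have h2 : ‖(r : ℝ) • x₀‖ ≤ (m : ℝ) * M := by
      rw [norm_smul, Real.norm_eq_abs, abs_of_nonneg (Nat.cast_nonneg r)]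
      exact mul_le_mul hrm (hMle x₀ hx₀) (norm_nonneg x₀) (Nat.cast_nonneg m)
    calc ‖(∑ x ∈ X, ((n : ℝ) * f x - (k x : ℝ)) • x) - (r : ℝ) • x₀‖
        ≤ ‖∑ x ∈ X, ((n : ℝ) * f x - (k x : ℝ)) • x‖ + ‖(r : ℝ) • x₀‖ := norm_sub_le _ _
      _ ≤ (m : ℝ) * M + (m : ℝ) * M := add_le_add h1 h2
      _ = R := by rw [hR]; ring
  · intro i
    exact hmem _ (l.get_mem _)
  · have : ∑ i : Fin n, l.get (Fin.cast hlen.symm i) = l.sum := by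
      rw [Fin.sum_congr' (fun j => l.get j) hlen.symm]
      rw [← List.sum_ofFn, List.ofFn_get]
    rw [this]
    abel
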